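/- (Approximate-vertex FW, fast rate under interior condition) Consider Frank-Wolfe on J(g) = ½‖g − μ‖² over a closed bounded convex set M in a Hilbert space with ‖g‖ ≤ R for all g ∈ M, step-size γ_k = 1/(k+1), and approximate vertex oracle with additive error δ ≥ 0. Suppose a ball of radius r > 0 centered at μ is contained in M. Then for all k ≥ 1, ‖g_k − μ‖ ≤ (1/k)(2R²/r) + δ/r. -/

import Mathlib

open RealInnerProductSpace

private lemma fw_aux (R r γ v a b : ℝ) (hr : 0 < r) (hrR : r ≤ R) (hb : 0 ≤ b)
    (hra : r * a = 2 * R ^ 2) (hγ0 : 0 < γ) (hγ1 : γ ≤ 1)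
    (hv0 : 0 ≤ v) (hv1 : v ≤ γ * a) :
    (v + (1 - γ) * b) ^ 2 - 2 * γ * r * v + 4 * γ ^ 2 * R ^ 2 ≤ (γ * a + b) ^ 2 := by
  have h2r : 2 * r ≤ a := by nlinarith
  nlinarith [mul_nonneg hv0 (sub_nonneg.2 hv1),
    mul_nonneg (mul_nonneg hγ0.le (by linarith : (0:ℝ) ≤ a - 2*r)) (sub_nonneg.2 hv1),
    mul_nonneg hb (sub_nonneg.2 hv1),
    mul_nonneg (mul_nonneg hγ0.le (by linarith : (0:ℝ) ≤ 1 - γ)) (sq_nonneg b),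
    mul_nonneg hγ0.le (sq_nonneg b),
    mul_nonneg (mul_nonneg hγ0.le hv0) hb]

set_option maxHeartbeats 1000000 in
theorem frank_wolfe_fast_rate
    {E : Type*} [NormedAddCommGroup E] [InnerProductSpace ℝ E] [CompleteSpace E]
    (M : Set E) (hconv : Convex ℝ M) (hclosed : IsClosed M)
    (R : ℝ) (hbound : ∀ g ∈ M, ‖g‖ ≤ R)
    (μ : E) (r : ℝ) (hr : 0 < r) (hball : Metric.closedBall μ r ⊆ M)
    (δ : ℝ) (hδ : 0 ≤ δ)
    (g gbar : ℕ → E)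
    (hg1 : g 1 ∈ M)
    (hvert : ∀ k, 1 ≤ k → gbar (k + 1) ∈ M)
    (horacle : ∀ k, 1 ≤ k → ∀ y ∈ M,
      ⟪g k - μ, gbar (k + 1)⟫ ≤ ⟪g k - μ, y⟫ + δ)
    (hupdate : ∀ k, 1 ≤ k →
      g (k + 1) = (1 - ((k : ℝ) + 1)⁻¹) • g k + ((k : ℝ) + 1)⁻¹ • gbar (k + 1)) :
    ∀ k, 1 ≤ k → ‖g k - μ‖ ≤ (1 / k) * (2 * R ^ 2 / r) + δ / r := by
  have hR0 : 0 ≤ R := le_trans (norm_nonneg _) (hbound _ hg1)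
  have hμM : μ ∈ M := hball (Metric.mem_closedBall_self hr.le)
  have hμR : ‖μ‖ ≤ R := hbound _ hμM
  rcases subsingleton_or_nontrivial E with hE | hE
  · intro k hk
    have hz : g k - μ = 0 := Subsingleton.elim _ _
    rw [hz, norm_zero]
    have hk1 : (1:ℝ) ≤ (k:ℝ) := by exact_mod_cast hk
    have h1 : (0:ℝ) ≤ 1 / (k:ℝ) := by positivity
    have h2 : (0:ℝ) ≤ 2 * R ^ 2 / r := by positivity
    have h3 : (0:ℝ) ≤ δ / r := div_nonneg hδ hr.le
    positivity
  · -- r ≤ R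
    obtain ⟨u, hu⟩ := exists_norm_eq E hr.le
    have hup : μ + u ∈ M := by
      apply hball
      simp [Metric.mem_closedBall, dist_eq_norm, hu]
    have hum : μ - u ∈ M := by
      apply hball
      simp [Metric.mem_closedBall, dist_eq_norm, hu]
    have hrR : r ≤ R := by
      have h1 : ‖(μ + u) - (μ - u)‖ ≤ ‖μ + u‖ + ‖μ - u‖ := norm_sub_le _ _
      have h2 : (μ + u) - (μ - u) = (2:ℝ) • u := by module
      rw [h2, norm_smul] at h1
      simp [hu] at h1
      have := hbound _ hup
      have := hbound _ hum
      linarith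
    have hb0 : (0:ℝ) ≤ δ / r := div_nonneg hδ hr.le
    have ha0 : (0:ℝ) ≤ 2 * R ^ 2 / r := by positivity
    have hra : r * (2 * R ^ 2 / r) = 2 * R ^ 2 := by field_simp
    have hrb : r * (δ / r) = δ := by field_simp
    intro k hk
    induction k, hk using Nat.le_induction with
    | base =>
      have h1 : ‖g 1 - μ‖ ≤ ‖g 1‖ + ‖μ‖ := norm_sub_le _ _
      have h2 : ‖g 1‖ ≤ R := hbound _ hg1
      have h3 : 2 * R ≤ 2 * R ^ 2 / r := by
        rw [le_div_iff₀ hr]; nlinarith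
      push_cast
      nlinarith
    | succ k hk ih =>
      have hK1 : (1:ℝ) ≤ (k:ℝ) := by exact_mod_cast hk
      have hK0 : (0:ℝ) < (k:ℝ) := by linarith
      have hKp : (0:ℝ) < (k:ℝ) + 1 := by linarith
      set γ : ℝ := ((k:ℝ) + 1)⁻¹ with hγdef
      have hγ0 : 0 < γ := by rw [hγdef]; positivity
      have hγ1 : γ ≤ 1 := by
        rw [hγdef]
        rw [inv_le_one_iff₀]
        right; linarith
      have h1γ : (0:ℝ) ≤ 1 - γ := by linarith
      set a : ℝ := 2 * R ^ 2 / r with hadef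
      set b : ℝ := δ / r with hbdef
      set e : E := g k - μ with hedef
      set w : ℝ := ‖e‖ with hwdef
      set d : E := gbar (k + 1) - μ with hddef
      -- update identity
      have hgeq : g (k + 1) - μ = (1 - γ) • e + γ • d := by
        rw [hupdate k hk, hedef, hddef, hγdef]; module
      -- bound on ‖d‖
      have hd2R : ‖d‖ ≤ 2 * R := by
        have := hbound _ (hvert k hk)
        calc ‖d‖ ≤ ‖gbar (k+1)‖ + ‖μ‖ := norm_sub_le _ _
          _ ≤ 2 * R := by linarith
      have hd2 : ‖d‖ ^ 2 ≤ (2 * R) ^ 2 := by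
        have := norm_nonneg d; nlinarith
      -- inner product bound
      have hip : ⟪e, d⟫ ≤ δ - r * w := by
        by_cases he : e = 0
        · simp [he, hwdef]; linarith
        · have hw0 : 0 < w := by rw [hwdef]; exact norm_pos_iff.2 he
          have hyM : μ - (r / w) • e ∈ M := by
            apply hball
            have : dist (μ - (r / w) • e) μ = r := by
              rw [dist_eq_norm]
              have h0 : μ - (r / w) • e - μ = -((r / w) • e) := by abel
              rw [h0, norm_neg, norm_smul, Real.norm_eq_abs,
                abs_of_nonneg (div_nonneg hr.le hw0.le)]
              field_simp
              exact hwdef.symm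
            rw [Metric.mem_closedBall, this]
          have horc := horacle k hk _ hyM
          have h1 : ⟪e, gbar (k + 1)⟫ = ⟪e, d⟫ + ⟪e, μ⟫ := by
            rw [hddef, inner_sub_right]; ring
          have h2 : ⟪e, μ - (r / w) • e⟫ = ⟪e, μ⟫ - r * w := by
            rw [inner_sub_right, real_inner_smul_right, real_inner_self_eq_norm_sq,
              ← hwdef]
            field_simp
          rw [← hedef] at horc
          rw [h1, h2] at horc
          linarith
      -- squared norm expansion
      have hsq : ‖g (k + 1) - μ‖ ^ 2
          = (1 - γ) ^ 2 * w ^ 2 + 2 * ((1 - γ) * γ) * ⟪e, d⟫ + γ ^ 2 * ‖d‖ ^ 2 := by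
        rw [hgeq, norm_add_sq_real, norm_smul, norm_smul, real_inner_smul_left,
          real_inner_smul_right, Real.norm_eq_abs, Real.norm_eq_abs,
          abs_of_nonneg h1γ, abs_of_nonneg hγ0.le]
        ring
      -- convert goal
      have hgoal : (1 / ((k:ℝ) + 1)) * a + b = γ * a + b := by
        rw [hγdef, one_div]
      have hfin : ‖g (k + 1) - μ‖ ≤ γ * a + b := by
        rcases le_total w b with hwb | hwb
        · -- small case: triangle inequality
          have ht : ‖g (k + 1) - μ‖ ≤ (1 - γ) * w + γ * ‖d‖ := by
            rw [hgeq]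
            calc ‖(1 - γ) • e + γ • d‖ ≤ ‖(1 - γ) • e‖ + ‖γ • d‖ := norm_add_le _ _
              _ = (1 - γ) * w + γ * ‖d‖ := by
                rw [norm_smul, norm_smul, Real.norm_eq_abs, Real.norm_eq_abs,
                  abs_of_nonneg h1γ, abs_of_nonneg hγ0.le, hwdef]
          have h2Ra : 2 * R ≤ a := by
            rw [hadef, le_div_iff₀ hr]; nlinarith
          linarith [ht, mul_le_mul_of_nonneg_left hd2R hγ0.le,
            mul_le_mul_of_nonneg_left hwb h1γ, mul_le_mul_of_nonneg_left h2Ra hγ0.le,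
            mul_nonneg hγ0.le hb0]
        · -- large case: quadratic argument
          have hwak : w - b ≤ a / (k:ℝ) := by
            rw [one_div_mul_eq_div] at ih
            linarith
          set v : ℝ := (1 - γ) * (w - b) with hvdef
          have hv0 : 0 ≤ v := mul_nonneg h1γ (by linarith)
          have hv1 : v ≤ γ * a := by
            have e1 : v ≤ (1 - γ) * (a / (k:ℝ)) :=
              mul_le_mul_of_nonneg_left hwak h1γ
            have e2 : (1 - γ) * (a / (k:ℝ)) = γ * a := by
              rw [hγdef]
              field_simp
              ring
            linarith
          have haux := fw_aux R r γ v a b hr hrR hb0 hra hγ0 hγ1 hv0 hv1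
          have hident : (1 - γ) ^ 2 * w ^ 2 + 2 * ((1 - γ) * γ) * (δ - r * w)
              + γ ^ 2 * (2 * R) ^ 2
              = (v + (1 - γ) * b) ^ 2 - 2 * γ * r * v + 4 * γ ^ 2 * R ^ 2 := by
            rw [hvdef, ← hrb]
            ring
          have hsq2 : ‖g (k + 1) - μ‖ ^ 2 ≤ (γ * a + b) ^ 2 := by
            rw [hsq]
            have t1 : 2 * ((1 - γ) * γ) * ⟪e, d⟫ ≤ 2 * ((1 - γ) * γ) * (δ - r * w) :=
              mul_le_mul_of_nonneg_left hip (by positivity)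
            have t2 : γ ^ 2 * ‖d‖ ^ 2 ≤ γ ^ 2 * (2 * R) ^ 2 :=
              mul_le_mul_of_nonneg_left hd2 (sq_nonneg γ)
            have key : (1 - γ) ^ 2 * w ^ 2 + 2 * ((1 - γ) * γ) * (δ - r * w)
                + γ ^ 2 * (2 * R) ^ 2 ≤ (γ * a + b) ^ 2 := by rw [hident]; exact haux
            linarith
          have hT0 : 0 ≤ γ * a + b := add_nonneg (mul_nonneg hγ0.le ha0) hb0
          nlinarith [norm_nonneg (g (k + 1) - μ)]
      have hc : (1:ℝ) / ((k:ℝ) + 1) * a + b = γ * a + b := by rw [hγdef, one_div]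
      push_cast
      linarith
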